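/- arXiv:1906.10523 — 9 statements merged into one kernel-verified Lean document; each statement's English description precedes it below -/
import Mathlib

section
/- Let G be an undirected graph, l ≥ 2, v a vertex of G, and X a v-hitting set (a set of vertices in the connected component of v, not containing v, that intersects every path on l vertices passing through v). Then there exists a minimum-size l-path vertex cover S of G such that either v ∉ S or |X \ S| ≥ 2. -/
variable {V : Type*} [Fintype V] [DecidableEq V]

/-- `L` is the list of vertices of a path in `G` (consecutive vertices adjacent, no repeats). -/
def IsPathL (G : SimpleGraph V) (L : List V) : Prop :=
  L.Chain' G.Adj ∧ L.Nodup

/-- `L` is an `l`-path in `G`: a path on exactly `l` vertices. -/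
def IsLPathL (G : SimpleGraph V) (l : ℕ) (L : List V) : Prop :=
  IsPathL G L ∧ L.length = l

/-- `L` is a `v`-path: an `l`-path containing the vertex `v`. -/
def IsVPathL (G : SimpleGraph V) (l : ℕ) (v : V) (L : List V) : Prop :=
  IsLPathL G l L ∧ v ∈ L

/-- `S` is an `l`-path vertex cover of `G`: `G - S` contains no `l`-path. -/
def IsLPVC (G : SimpleGraph V) (l : ℕ) (S : Finset V) : Prop :=
  ¬ ∃ L, IsLPathL G l L ∧ ∀ x ∈ L, x ∉ S

/-- `X` is a `v`-hitting set: a set of vertices of the connected component of `v`,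
not containing `v`, intersecting every `v`-path. -/
def IsVHit (G : SimpleGraph V) (l : ℕ) (v : V) (X : Finset V) : Prop :=
  v ∉ X ∧ (∀ x ∈ X, G.Reachable v x) ∧
    ∀ L, IsVPathL G l v L → ∃ x ∈ X, x ∈ L

/-- `u` is reachable from `w` by a walk avoiding the set `S`
(i.e. `u` is in the connected component of `w` in `G - S`). -/
def ReachAvoid (G : SimpleGraph V) (S : Set V) (w u : V) : Prop :=
  ∃ q : G.Walk w u, ∀ x ∈ q.support, x ∉ S

/-- Two `v`-paths are intersecting if they have different vertex sets and share
a vertex other than `v`. -/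
def IntersectingVP (v : V) (L L' : List V) : Prop :=
  L.toFinset ≠ L'.toFinset ∧ ∃ u, u ≠ v ∧ u ∈ L ∧ u ∈ L'

theorem stmt_0 (G : SimpleGraph V) (l : ℕ) (v : V) (X : Finset V)
    (hl : 2 ≤ l) (hX : IsVHit G l v X) :
    ∃ S : Finset V, IsLPVC G l S ∧ (∀ T : Finset V, IsLPVC G l T → S.card ≤ T.card) ∧
      (v ∉ S ∨ 2 ≤ (X \ S).card) := by
  classical
  -- univ is an LPVC
  have huniv : IsLPVC G l (Finset.univ : Finset V) := by
    rintro ⟨L, ⟨_, hlen⟩, hav⟩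
    have : L ≠ [] := by
      intro h; rw [h] at hlen; simp at hlen; omega
    obtain ⟨a, ha⟩ := List.exists_mem_of_ne_nil L this
    exact hav a ha (Finset.mem_univ a)
  -- get a minimum LPVC
  set 𝒮 : Finset (Finset V) := Finset.univ.filter (fun S => IsLPVC G l S) with h𝒮
  have hne : 𝒮.Nonempty := ⟨Finset.univ, by simp [h𝒮, huniv]⟩
  obtain ⟨S, hSmem, hSmin⟩ := Finset.exists_min_image 𝒮 Finset.card hne
  have hS : IsLPVC G l S := by simpa [h𝒮] using hSmem
  have hSmin' : ∀ T : Finset V, IsLPVC G l T → S.card ≤ T.card := by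
    intro T hT
    exact hSmin T (by simp [h𝒮, hT])
  by_cases hv : v ∈ S
  · by_cases hc : 2 ≤ (X \ S).card
    · exact ⟨S, hS, hSmin', Or.inr hc⟩
    · -- swap argument
      push_neg at hc
      set S' : Finset V := (S.erase v) ∪ (X \ S) with hS'
      have hvX : v ∉ X := hX.1
      have hS'cov : IsLPVC G l S' := by
        rintro ⟨L, hLp, hav⟩
        -- L must hit S
        have hhit : ∃ x ∈ L, x ∈ S := by
          by_contra h
          push_neg at h
          exact hS ⟨L, hLp, h⟩
        obtain ⟨x, hxL, hxS⟩ := hhit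
        have hxv : x = v := by
          by_contra hne
          exact hav x hxL (Finset.mem_union_left _ (Finset.mem_erase.mpr ⟨hne, hxS⟩))
        subst hxv
        -- L is a v-path
        obtain ⟨y, hyX, hyL⟩ := hX.2.2 L ⟨hLp, hxL⟩
        by_cases hyS : y ∈ S
        · have hyv : y ≠ x := fun h => hvX (h ▸ hyX)
          exact hav y hyL (Finset.mem_union_left _ (Finset.mem_erase.mpr ⟨hyv, hyS⟩))
        · exact hav y hyL (Finset.mem_union_right _ (Finset.mem_sdiff.mpr ⟨hyX, hyS⟩))
      have hcard : S'.card ≤ S.card := by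
        calc S'.card ≤ (S.erase v).card + (X \ S).card := Finset.card_union_le _ _
        _ ≤ (S.card - 1) + 1 := by
            have := Finset.card_erase_of_mem hv
            omega
        _ ≤ S.card := by
            have : 1 ≤ S.card := Finset.card_pos.mpr ⟨v, hv⟩
            omega
      refine ⟨S', hS'cov, fun T hT => le_trans hcard (hSmin' T hT), Or.inl ?_⟩
      simp [hS', hvX]
  · exact ⟨S, hS, hSmin', Or.inl hv⟩
end

section
/- Let G be an undirected graph, l ≥ 2, and v a vertex of G such that the minimum size of a v-hitting set equals 1. Then there exists a minimum-size l-path vertex cover S of G with v ∉ S. -/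
variable {V : Type*} [Fintype V] [DecidableEq V]

theorem stmt_1 (G : SimpleGraph V) (l : ℕ) (v : V)
    (hl : 2 ≤ l)
    (hβ1 : ∃ X : Finset V, IsVHit G l v X ∧ X.card = 1)
    (hβ0 : ¬ IsVHit G l v (∅ : Finset V)) :
    ∃ S : Finset V, IsLPVC G l S ∧ (∀ T : Finset V, IsLPVC G l T → S.card ≤ T.card) ∧
      v ∉ S := by
  classical
  obtain ⟨X, hX, hXcard⟩ := hβ1
  obtain ⟨x, rfl⟩ := Finset.card_eq_one.mp hXcard
  obtain ⟨hvx, -, hhit⟩ := hX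
  have hvne : v ≠ x := by simpa using hvx
  have hne : ∃ n, ∃ S : Finset V, IsLPVC G l S ∧ S.card = n := by
    refine ⟨(Finset.univ : Finset V).card, Finset.univ, ?_, rfl⟩
    rintro ⟨L, ⟨_, hlen⟩, hav⟩
    have hL : L ≠ [] := by intro h; rw [h] at hlen; simp at hlen; omega
    obtain ⟨a, ha⟩ := List.exists_mem_of_ne_nil L hL
    exact hav a ha (Finset.mem_univ a)
  obtain ⟨T, hT, hTn⟩ := Nat.find_spec hne
  have hmin : ∀ T' : Finset V, IsLPVC G l T' → T.card ≤ T'.card := by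
    intro T' hT'
    rw [hTn]
    exact Nat.find_le ⟨T', hT', rfl⟩
  by_cases hv : v ∈ T
  · refine ⟨insert x (T.erase v), ?_, ?_, ?_⟩
    · rintro ⟨L, hLp, hav⟩
      by_cases hvL : v ∈ L
      · obtain ⟨u, hu, huL⟩ := hhit L ⟨hLp, hvL⟩
        rw [Finset.mem_singleton] at hu; subst hu
        exact hav u huL (Finset.mem_insert_self _ _)
      · exact hT ⟨L, hLp, fun y hy hyT => hav y hy
          (Finset.mem_insert_of_mem (Finset.mem_erase.mpr
            ⟨by rintro rfl; exact hvL hy, hyT⟩))⟩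
    · intro T' hT'
      calc (insert x (T.erase v)).card ≤ (T.erase v).card + 1 :=
            Finset.card_insert_le _ _
        _ = T.card := by rw [Finset.card_erase_of_mem hv]
                         have := Finset.card_pos.mpr ⟨v, hv⟩; omega
        _ ≤ T'.card := hmin T' hT'
    · simp [hvne]
  · exact ⟨T, hT, hmin, hv⟩
end

section
/- Let G be a graph, v a vertex, and suppose β(G,v) = 2 with v-hitting set X = {w_1, w_2}. Suppose no vertex u of G satisfies that G_u − u contains no l-path (i.e., reduction rule R4 is not applicable), and the connected components C_1, C_2 of G_v − v containing w_1 and w_2 respectively induce subgraphs containing no l-path. Then there is exactly one connected component C_0 of G_v − v whose induced subgraph contains an l-path. -/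
variable {V : Type*} [Fintype V] [DecidableEq V]

set_option linter.unusedSectionVars false

section Helpers

variable {G : SimpleGraph V} {S : Set V}

lemma ra_refl {w : V} (h : w ∉ S) : ReachAvoid G S w w :=
  ⟨SimpleGraph.Walk.nil, by simp [h]⟩

lemma ra_symm {a b : V} : ReachAvoid G S a b → ReachAvoid G S b a := by
  rintro ⟨q, hq⟩
  exact ⟨q.reverse, by simpa [SimpleGraph.Walk.support_reverse] using hq⟩

lemma ra_trans {a b c : V} : ReachAvoid G S a b → ReachAvoid G S b c → ReachAvoid G S a c := by
  rintro ⟨q, hq⟩ ⟨r, hr⟩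
  refine ⟨q.append r, fun x hx => ?_⟩
  rw [SimpleGraph.Walk.support_append] at hx
  rcases List.mem_append.1 hx with h | h
  · exact hq x h
  · exact hr x (List.mem_of_mem_tail h)

lemma ra_adj {a b : V} (hab : G.Adj a b) (ha : a ∉ S) (hb : b ∉ S) : ReachAvoid G S a b :=
  ⟨SimpleGraph.Walk.cons hab SimpleGraph.Walk.nil, by
    intro x hx
    simp only [SimpleGraph.Walk.support_cons, SimpleGraph.Walk.support_nil,
      List.mem_cons, List.mem_singleton, List.not_mem_nil] at hx
    rcases hx with rfl | rfl | h
    · exact ha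
    · exact hb
    · exact absurd h (by simp)⟩

lemma chain'_ra_head : ∀ (L : List V) (a : V), (a :: L).Chain' G.Adj →
    (∀ x ∈ a :: L, x ∉ S) → ∀ x ∈ a :: L, ReachAvoid G S a x
  | [], a, _, hS, x, hx => by
      simp only [List.mem_singleton] at hx
      subst hx
      exact ra_refl (hS x (by simp))
  | b :: t, a, hc, hS, x, hx => by
      have hab : G.Adj a b := (List.isChain_cons_cons.1 hc).1
      have hrab : ReachAvoid G S a b := ra_adj hab (hS a (by simp)) (hS b (by simp))
      rcases List.mem_cons.1 hx with rfl | hx'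
      · exact ra_refl (hS x (by simp))
      · exact ra_trans hrab (chain'_ra_head t b (List.isChain_cons_cons.1 hc).2
          (fun y hy => hS y (List.mem_cons_of_mem _ hy)) x hx')

lemma chain'_ra {L : List V} (hc : L.Chain' G.Adj) (hS : ∀ x ∈ L, x ∉ S) :
    ∀ x ∈ L, ∀ y ∈ L, ReachAvoid G S x y := by
  intro x hx y hy
  cases L with
  | nil => simp at hx
  | cons a t =>
    exact ra_trans (ra_symm (chain'_ra_head t a hc hS x hx)) (chain'_ra_head t a hc hS y hy)

lemma chain'_rev {L : List V} (h : L.Chain' G.Adj) : L.reverse.Chain' G.Adj := by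
  show List.IsChain _ _
  rw [List.isChain_reverse]
  exact h.imp fun _ _ hab => hab.symm

/-- Key lemma: if the component (in `G - v`) of `w` contains an `l`-path, then from `v`
there is a "segment": a path starting at a neighbour of `v`, avoiding `v`, inside that
component, of length at least `⌈(l+1)/2⌉`. -/
lemma segment_exists (G : SimpleGraph V) (l : ℕ) (v w : V) (M : List V)
    (hM : IsLPathL G l M) (hl : 1 ≤ l) (hvw : G.Reachable v w)
    (hMr : ∀ x ∈ M, ReachAvoid G ({v} : Set V) w x) :
    ∃ (s₀ : V) (S' : List V), (s₀ :: S').Chain' G.Adj ∧ (s₀ :: S').Nodup ∧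
      (∀ x ∈ s₀ :: S', x ≠ v) ∧ G.Adj v s₀ ∧ l + 1 ≤ 2 * (s₀ :: S').length ∧
      ∀ x ∈ s₀ :: S', ReachAvoid G ({v} : Set V) w x := by
  classical
  have hMne : M ≠ [] := by
    intro h
    rw [h] at hM
    have := hM.2
    simp at this
    omega
  have hvM : ∀ x ∈ M, x ≠ v := by
    intro x hx
    obtain ⟨q, hq⟩ := hMr x hx
    have := hq x q.end_mem_support
    simpa using this
  set m₀ := M.head hMne with hm₀
  have hm₀M : m₀ ∈ M := List.head_mem hMne
  obtain ⟨q, hq⟩ := hMr m₀ hm₀M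
  obtain ⟨W⟩ := hvw
  set full := (W.append q).bypass with hfull
  set P := full.support with hP
  have hPnd : P.Nodup := (SimpleGraph.Walk.bypass_isPath _).support_nodup
  have hPchain : P.Chain' G.Adj := full.isChain_adj_support
  have hm₀P : m₀ ∈ P := full.end_mem_support
  have hvP : P = v :: P.tail := full.support_eq_cons
  -- first vertex of P in M
  set p : V → Bool := fun x => decide (x ∉ M) with hp
  set Q := P.takeWhile p with hQ
  set D := P.dropWhile p with hD
  have hQD : Q ++ D = P := List.takeWhile_append_dropWhile
  have hDne : D ≠ [] := by
    intro h
    have := List.dropWhile_eq_nil_iff.1 h m₀ hm₀P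
    simp [hp] at this
    exact this hm₀M
  set m := D.head hDne with hm
  have hmM : m ∈ M := by
    have h1 : p m = false := List.head_dropWhile_not p hDne
    simpa [hp] using h1
  have hQM : ∀ x ∈ Q, x ∉ M := by
    intro x hx
    have := List.mem_takeWhile_imp hx
    simpa [hp] using this
  have hvnM : v ∉ M := fun h => (hvM v h) rfl
  -- Q starts with v
  have hQv : Q = v :: P.tail.takeWhile p := by
    have h := congrArg (List.takeWhile p) hvP
    rw [List.takeWhile_cons_of_pos (by simp [hp, hvnM])] at h
    exact h
  set Qt := P.tail.takeWhile p with hQt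
  have hDsplit : D = m :: D.tail := (List.cons_head_tail hDne).symm
  have hPsplit : P = (Q ++ [m]) ++ D.tail := by
    rw [← hQD, hDsplit]
    simp
  have hQmchain : (Q ++ [m]).Chain' G.Adj := by
    have := hPchain
    rw [hPsplit] at this
    exact (List.isChain_append.1 this).1
  have hQnd : Q.Nodup := hPnd.sublist ((List.takeWhile_prefix p).sublist)
  -- split M at m
  obtain ⟨A, B, hAB⟩ := List.append_of_mem hmM
  have hMnd : M.Nodup := hM.1.2
  have hMchain : M.Chain' G.Adj := hM.1.1
  have hABlen : A.length + 1 + B.length = l := by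
    have := hM.2
    rw [hAB] at this
    simp at this
    omega
  -- the long side of M from m
  have hside : ∃ sd : List V, (m :: sd).Chain' G.Adj ∧ (m :: sd).Nodup ∧
      (∀ x ∈ m :: sd, x ∈ M) ∧ l + 1 ≤ 2 * (m :: sd).length := by
    by_cases hAle : A.length ≤ B.length
    · refine ⟨B, ?_, ?_, ?_, ?_⟩
      · have := hMchain
        rw [hAB] at this
        exact (List.isChain_append.1 this).2.1
      · have := hMnd
        rw [hAB] at this
        exact ((List.suffix_append A (m :: B)).sublist).nodup this
      · intro x hx
        rw [hAB]
        exact List.mem_append_right _ hx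
      · simp
        omega
    · refine ⟨A.reverse, ?_, ?_, ?_, ?_⟩
      · have h1 : (A ++ [m]).Chain' G.Adj := by
          have := hMchain
          rw [hAB, show A ++ m :: B = (A ++ [m]) ++ B by simp] at this
          exact (List.isChain_append.1 this).1
        have := chain'_rev h1
        simpa using this
      · have h1 : (A ++ [m]).Nodup := by
          have := hMnd
          rw [hAB, show A ++ m :: B = (A ++ [m]) ++ B by simp] at this
          exact ((List.prefix_append (A ++ [m]) B).sublist).nodup this
        rw [show (m :: A.reverse) = (A ++ [m]).reverse by simp]
        exact (List.nodup_reverse).2 h1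
      · intro x hx
        rw [hAB]
        simp only [List.mem_cons, List.mem_reverse] at hx
        rcases hx with rfl | hx
        · simp
        · simp [hx]
      · simp
        omega
  obtain ⟨sd, hsdc, hsdn, hsdM, hsdl⟩ := hside
  -- assemble: T := Qt ++ m :: sd
  set T := Qt ++ m :: sd with hT
  have hTne : T ≠ [] := by
    rw [hT]
    simp
  have hchainvT : (v :: T).Chain' G.Adj := by
    have h1 : ((Q ++ [m]) ++ sd).Chain' G.Adj := by
      show List.IsChain _ _
      rw [List.isChain_append]
      refine ⟨hQmchain, (List.isChain_cons.1 hsdc).2, ?_⟩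
      intro x hx y hy
      rw [List.getLast?_concat] at hx
      simp only [Option.mem_some_iff] at hx
      subst hx
      exact (List.isChain_cons.1 hsdc).1 y hy
    have h2 : (Q ++ [m]) ++ sd = v :: T := by
      rw [hQv, hT]
      simp
    rw [← h2]
    exact h1
  have hTM : ∀ x ∈ T, x ∈ Qt ∨ x ∈ M := by
    intro x hx
    rcases List.mem_append.1 hx with h | h
    · exact Or.inl h
    · exact Or.inr (hsdM x h)
  have hQtM : ∀ x ∈ Qt, x ∉ M := by
    intro x hx
    exact hQM x (by rw [hQv]; exact List.mem_cons_of_mem _ hx)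
  have hvQt : v ∉ Qt := by
    intro h
    have := hQnd
    rw [hQv] at this
    exact (List.nodup_cons.1 this).1 h
  have hvT : ∀ x ∈ T, x ≠ v := by
    intro x hx
    rcases hTM x hx with h | h
    · intro hxv; subst hxv; exact hvQt h
    · exact hvM x h
  have hTnd : T.Nodup := by
    rw [hT]
    refine List.Nodup.append ?_ hsdn ?_
    · have := hQnd
      rw [hQv] at this
      exact (List.nodup_cons.1 this).2
    · intro x hx hx'
      exact hQtM x hx (hsdM x hx')
  have hTra : ∀ x ∈ T, ReachAvoid G ({v} : Set V) w x := by
    intro x hx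
    have hchainT : T.Chain' G.Adj := hchainvT.tail
    have hmT : m ∈ T := by
      rw [hT]
      exact List.mem_append_right _ (by simp)
    have h1 : ReachAvoid G ({v} : Set V) x m :=
      chain'_ra hchainT (fun y hy => by simpa using hvT y hy) x hx m hmT
    exact ra_trans (hMr m hmM) (ra_symm h1)
  obtain ⟨s₀, S', hTs⟩ : ∃ s₀ S', T = s₀ :: S' := by
    cases hTc : T with
    | nil => exact absurd hTc hTne
    | cons a t => exact ⟨a, t, rfl⟩
  have hadj : G.Adj v s₀ := by
    have := (List.isChain_cons.1 hchainvT).1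
    rw [hTs] at this
    exact this s₀ (by simp)
  have hlen : l + 1 ≤ 2 * T.length := by
    have : (m :: sd).length ≤ T.length := by
      rw [hT]
      simp
    omega
  rw [hTs] at hchainvT hTnd hvT hlen hTra
  exact ⟨s₀, S', hchainvT.tail, hTnd, hvT, hadj, hlen, hTra⟩

end Helpers

theorem stmt_7 (G : SimpleGraph V) (l : ℕ) (v w₁ w₂ : V)
    (hl : 2 ≤ l) (hw : w₁ ≠ w₂)
    (hXhit : IsVHit G l v {w₁, w₂})
    (hβ2 : ∀ Y : Finset V, IsVHit G l v Y → 2 ≤ Y.card)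
    (hR4 : ∀ u : V, ∃ M : List V, IsLPathL G l M ∧
      ∀ x ∈ M, G.Reachable u x ∧ x ≠ u)
    (hC1 : ¬ ∃ M : List V, IsLPathL G l M ∧ ∀ x ∈ M, ReachAvoid G {v} w₁ x)
    (hC2 : ¬ ∃ M : List V, IsLPathL G l M ∧ ∀ x ∈ M, ReachAvoid G {v} w₂ x) :
    ∃ w : V, (G.Reachable v w ∧ w ≠ v ∧
        (∃ M : List V, IsLPathL G l M ∧ ∀ x ∈ M, ReachAvoid G {v} w x)) ∧
      ∀ w' : V, (G.Reachable v w' ∧ w' ≠ v ∧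
        (∃ M : List V, IsLPathL G l M ∧ ∀ x ∈ M, ReachAvoid G {v} w' x)) →
          ReachAvoid G {v} w w' := by
  classical
  have hl1 : 1 ≤ l := by omega
  obtain ⟨M, hM, hMprop⟩ := hR4 v
  have hMne : M ≠ [] := by
    intro h
    rw [h] at hM
    have := hM.2
    simp at this
    omega
  set w := M.head hMne with hw_def
  have hwM : w ∈ M := List.head_mem hMne
  have hMr : ∀ x ∈ M, ReachAvoid G ({v} : Set V) w x := by
    intro x hx
    exact chain'_ra hM.1.1 (fun y hy => by simpa using (hMprop y hy).2) w hwM x hx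
  refine ⟨w, ⟨(hMprop w hwM).1, (hMprop w hwM).2, M, hM, hMr⟩, ?_⟩
  rintro w' ⟨hvw', hw'v, M', hM', hM'r⟩
  by_contra hcon
  obtain ⟨s₀, S₁, hc1, hn1, hv1, hadj1, hlen1, hr1⟩ :=
    segment_exists G l v w M hM hl1 (hMprop w hwM).1 hMr
  obtain ⟨s₀', S₂, hc2, hn2, hv2, hadj2, hlen2, hr2⟩ :=
    segment_exists G l v w' M' hM' hl1 hvw' hM'r
  set S : List V := s₀ :: S₁ with hS_def
  set T : List V := s₀' :: S₂ with hT_def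
  have hdisj : ∀ x, x ∈ S → x ∈ T → False := fun x hxS hxT =>
    hcon (ra_trans (hr1 x hxS) (ra_symm (hr2 x hxT)))
  have hSlen : 1 ≤ S.length := by rw [hS_def]; simp
  have hTlen : 1 ≤ T.length := by rw [hT_def]; simp
  set a := min S.length (l - 1) with ha_def
  set b := l - 1 - a with hb_def
  have ha1 : 1 ≤ a := by omega
  have haS : a ≤ S.length := min_le_left _ _
  have hbT : b ≤ T.length := by omega
  have hab : a + 1 + b = l := by omega
  set L : List V := (S.take a).reverse ++ v :: T.take b with hL_def
  -- take a of S starts with s₀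
  have hStake : S.take a = s₀ :: S₁.take (a - 1) := by
    obtain ⟨n, hn⟩ : ∃ n, a = n + 1 := ⟨a - 1, by omega⟩
    rw [hS_def, hn]
    simp
  have hTtake : b ≠ 0 → T.take b = s₀' :: S₂.take (b - 1) := by
    intro hb0
    obtain ⟨n, hn⟩ : ∃ n, b = n + 1 := ⟨b - 1, by omega⟩
    rw [hT_def, hn]
    simp
  have hLchain : L.Chain' G.Adj := by
    rw [hL_def]
    show List.IsChain _ _
    rw [List.isChain_append]
    refine ⟨chain'_rev (hc1.take a), ?_, ?_⟩
    · rw [List.isChain_cons]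
      refine ⟨?_, hc2.take b⟩
      intro y hy
      rcases Nat.eq_zero_or_pos b with hb0 | hb0
      · rw [hb0] at hy; simp at hy
      · rw [hTtake (by omega)] at hy
        simp only [List.head?_cons, Option.mem_some_iff] at hy
        subst hy
        exact hadj2
    · intro x hx y hy
      simp only [List.head?_cons, Option.mem_some_iff] at hy
      subst hy
      rw [List.getLast?_reverse, hStake] at hx
      simp only [List.head?_cons, Option.mem_some_iff] at hx
      subst hx
      exact hadj1.symm
  have hmemS : ∀ x ∈ (S.take a).reverse, x ∈ S := by
    intro x hx
    rw [List.mem_reverse] at hx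
    exact (List.take_sublist a S).mem hx
  have hmemT : ∀ x ∈ T.take b, x ∈ T := fun x hx => (List.take_sublist b T).mem hx
  have hLnodup : L.Nodup := by
    rw [hL_def]
    refine List.Nodup.append ?_ ?_ ?_
    · exact (List.nodup_reverse).2 ((List.take_sublist a S).nodup hn1)
    · rw [List.nodup_cons]
      refine ⟨fun h => hv2 v (hmemT v h) rfl, (List.take_sublist b T).nodup hn2⟩
    · intro x hx hx'
      have hxS := hmemS x hx
      rcases List.mem_cons.1 hx' with rfl | hx''
      · exact hv1 x hxS rfl
      · exact hdisj x hxS (hmemT x hx'')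
  have hLlen : L.length = l := by
    rw [hL_def]
    simp only [List.length_append, List.length_reverse, List.length_take, List.length_cons]
    omega
  have hvL : v ∈ L := by
    rw [hL_def]
    simp
  obtain ⟨x, hxX, hxL⟩ := hXhit.2.2 L ⟨⟨⟨hLchain, hLnodup⟩, hLlen⟩, hvL⟩
  have hxne : x ≠ v := by
    intro h
    subst h
    exact hXhit.1 hxX
  have hxST : x ∈ S ∨ x ∈ T := by
    rw [hL_def] at hxL
    rcases List.mem_append.1 hxL with h | h
    · exact Or.inl (hmemS x h)
    · rcases List.mem_cons.1 h with rfl | h'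
      · exact absurd rfl hxne
      · exact Or.inr (hmemT x h')
  have hx12 : x = w₁ ∨ x = w₂ := by
    simpa using hxX
  -- in either case, x's component contains an l-path, contradicting hC1/hC2
  rcases hxST with hxS | hxT
  · have hxM : ∀ y ∈ M, ReachAvoid G ({v} : Set V) x y :=
      fun y hy => ra_trans (ra_symm (hr1 x hxS)) (hMr y hy)
    rcases hx12 with rfl | rfl
    · exact hC1 ⟨M, hM, hxM⟩
    · exact hC2 ⟨M, hM, hxM⟩
  · have hxM : ∀ y ∈ M', ReachAvoid G ({v} : Set V) x y :=
      fun y hy => ra_trans (ra_symm (hr2 x hxT)) (hM'r y hy)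
    rcases hx12 with rfl | rfl
    · exact hC1 ⟨M', hM', hxM⟩
    · exact hC2 ⟨M', hM', hxM⟩
end

section
/- Let G be a connected graph containing an l-path, v a vertex of G, and C a connected component of G − v containing an l-path y_1,…,y_l. Then G contains a path of at least ⌈l/2⌉ + 1 vertices starting at v whose other vertices all lie in C. Consequently, if two distinct components C_0, C'_0 of G − v each contain an l-path, then G contains a v-path (an l-path through v) all of whose vertices other than v lie in C_0 ∪ C'_0. -/
variable {V : Type*} [Fintype V] [DecidableEq V]

lemma ra_refl_s8 {G : SimpleGraph V} {S : Set V} {x : V} (hx : x ∉ S) :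
    ReachAvoid G S x x :=
  ⟨SimpleGraph.Walk.nil, by
    intro y hy
    simp only [SimpleGraph.Walk.support_nil, List.mem_singleton] at hy
    subst hy; exact hx⟩

lemma ra_symm_s8 {G : SimpleGraph V} {S : Set V} {x y : V} (h : ReachAvoid G S x y) :
    ReachAvoid G S y x := by
  obtain ⟨q, hq⟩ := h
  exact ⟨q.reverse, fun z hz =>
    hq z (by simpa [SimpleGraph.Walk.support_reverse] using hz)⟩

lemma ra_trans_s8 {G : SimpleGraph V} {S : Set V} {x y z : V}
    (h1 : ReachAvoid G S x y) (h2 : ReachAvoid G S y z) : ReachAvoid G S x z := by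
  obtain ⟨q, hq⟩ := h1; obtain ⟨r, hr⟩ := h2
  refine ⟨q.append r, fun a ha => ?_⟩
  rw [SimpleGraph.Walk.support_append, List.mem_append] at ha
  rcases ha with ha | ha
  · exact hq a ha
  · exact hr a (List.mem_of_mem_tail ha)

lemma ra_adj_s8 {G : SimpleGraph V} {S : Set V} {x y : V} (h : G.Adj x y)
    (hx : x ∉ S) (hy : y ∉ S) : ReachAvoid G S x y :=
  ⟨SimpleGraph.Walk.cons h SimpleGraph.Walk.nil, by
    intro a ha
    simp only [SimpleGraph.Walk.support_cons, SimpleGraph.Walk.support_nil,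
      List.mem_cons, List.mem_singleton, List.not_mem_nil, or_false] at ha
    rcases ha with rfl | rfl
    · exact hx
    · exact hy⟩

lemma reach_within {G : SimpleGraph V} {v : V} :
    ∀ (L : List V), List.Chain' G.Adj L → v ∉ L → ∀ x ∈ L, ∀ (hL : L ≠ []),
      ReachAvoid G {v} x (L.getLast hL)
  | [], _, _, x, hx, hL => absurd rfl hL
  | [a], _, hv, x, hx, hL => by
      simp only [List.mem_singleton] at hx; subst hx
      simp only [List.getLast_singleton]
      exact ra_refl_s8 (by simpa using fun h => hv (by simp [h]))
  | a :: b :: L, hc, hv, x, hx, hL => by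
      have hLast : (a :: b :: L).getLast hL = (b :: L).getLast (by simp) :=
        List.getLast_cons _
      rw [hLast]
      have hv' : v ∉ b :: L := fun h => hv (List.mem_cons_of_mem _ h)
      have hcc := List.isChain_cons_cons.mp hc
      rcases List.mem_cons.mp hx with rfl | hx'
      · have h1 : ReachAvoid G ({v} : Set V) x b := by
          refine ra_adj_s8 hcc.1 ?_ ?_
          · simp only [Set.mem_singleton_iff]
            rintro rfl; exact hv (by simp)
          · simp only [Set.mem_singleton_iff]
            rintro rfl; exact hv' (by simp)
        exact ra_trans_s8 h1 (reach_within (b :: L) hcc.2 hv' b (by simp) (by simp))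
      · exact reach_within (b :: L) hcc.2 hv' x hx' (by simp)

lemma chain'_adj_rev {G : SimpleGraph V} {L : List V} (h : List.Chain' G.Adj L) :
    List.Chain' G.Adj L.reverse := by
  rw [List.Chain', List.isChain_reverse]
  exact h.imp fun a b hab => hab.symm

lemma part1_finish {G : SimpleGraph V} {v w : V} {k : ℕ} (pre T' : List V) (u : V)
    (hcp : List.Chain' G.Adj (pre ++ [u]))
    (hnp : (pre ++ [u]).Nodup)
    (hhead : pre.head? = some v)
    (hcT : List.Chain' G.Adj (u :: T'))
    (hnT : (u :: T').Nodup)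
    (hdisj : ∀ x ∈ pre, x ∉ u :: T')
    (hra : ∀ x ∈ u :: T', ReachAvoid G {v} w x)
    (hk : k ≤ T'.length + 1) :
    ∃ M : List V, IsPathL G M ∧ M.head? = some v ∧ k + 1 ≤ M.length ∧
      ∀ x ∈ M.tail, ReachAvoid G {v} w x := by
  obtain ⟨p0, pre', rfl⟩ : ∃ p0 pre'', pre = p0 :: pre'' := by
    cases pre with
    | nil => simp at hhead
    | cons a t => exact ⟨a, t, rfl⟩
  obtain rfl : v = p0 := by simpa using hhead.symm
  have hMc : List.Chain' G.Adj ((v :: pre') ++ u :: T') := by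
    rw [List.Chain', List.isChain_append]
    have h2 := List.isChain_append.mp hcp
    refine ⟨h2.1, hcT, ?_⟩
    intro x hx y hy
    simp only [List.head?_cons, Option.mem_def, Option.some.injEq] at hy
    subst hy
    exact h2.2.2 x hx u (by simp)
  have hMn : ((v :: pre') ++ u :: T').Nodup := by
    rw [List.nodup_append']
    exact ⟨(List.nodup_append'.mp hnp).1, hnT, hdisj⟩
  have hMt_ne : pre' ++ u :: T' ≠ [] := by simp
  have hvMt : v ∉ pre' ++ u :: T' := by
    have h := hMn
    rw [List.cons_append, List.nodup_cons] at h
    exact h.1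
  refine ⟨(v :: pre') ++ u :: T', ⟨hMc, hMn⟩, by simp,
    by simp only [List.length_append, List.length_cons]; omega, ?_⟩
  intro x hx
  have hxMt : x ∈ pre' ++ u :: T' := hx
  have hgl : (pre' ++ u :: T').getLast hMt_ne ∈ u :: T' := by
    rw [List.getLast_append, dif_neg (by simp)]
    exact List.getLast_mem _
  exact ra_trans_s8 (hra _ hgl)
    (ra_symm_s8 (reach_within (pre' ++ u :: T') hMc.tail hvMt x hxMt hMt_ne))

lemma part1 {G : SimpleGraph V} {l : ℕ} {v : V} (hl : 2 ≤ l) (hconn : G.Connected)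
    (w : V) (Y : List V) (hY : IsLPathL G l Y)
    (hYC : ∀ x ∈ Y, ReachAvoid G {v} w x) :
    ∃ M : List V, IsPathL G M ∧ M.head? = some v ∧ (l + 1) / 2 + 1 ≤ M.length ∧
      ∀ x ∈ M.tail, ReachAvoid G {v} w x := by
  obtain ⟨⟨hYc, hYn⟩, hYl⟩ := hY
  have hYne : Y ≠ [] := by intro h; rw [h] at hYl; simp at hYl; omega
  have hvY : v ∉ Y := by
    intro hv
    obtain ⟨q, hq⟩ := hYC v hv
    exact hq v q.end_mem_support rfl
  obtain ⟨q⟩ := hconn.preconnected v (Y.head hYne)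
  set P := q.toPath.1.support with hP
  have hPc : List.Chain' G.Adj P := q.toPath.1.isChain_adj_support
  have hPn : P.Nodup := q.toPath.2.support_nodup
  have hPhead : P.head? = some v := by
    rw [hP, SimpleGraph.Walk.support_eq_cons]; rfl
  have hYheadP : Y.head hYne ∈ P := SimpleGraph.Walk.end_mem_support _
  set pre := P.takeWhile (fun x => !(decide (x ∈ Y))) with hpre
  set rest := P.dropWhile (fun x => !(decide (x ∈ Y))) with hrest
  have hPsplit : pre ++ rest = P := List.takeWhile_append_dropWhile
  have hrest_ne : rest ≠ [] := by
    intro h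
    have hmem : Y.head hYne ∈ pre := by
      rw [← hPsplit, h, List.append_nil] at hYheadP; exact hYheadP
    have := List.mem_takeWhile_imp hmem
    exact (by simpa using this : Y.head hYne ∉ Y) (List.head_mem hYne)
  set u := rest.head hrest_ne with hu
  have huY : u ∈ Y := by
    have := List.head_dropWhile_not (fun x => !(decide (x ∈ Y))) hrest_ne
    simpa using this
  have hrest_cons : rest = u :: rest.tail := (List.cons_head_tail hrest_ne).symm
  have hQpre : (pre ++ [u]) <+: P := by
    rw [← hPsplit, hrest_cons]
    exact ⟨rest.tail, by simp⟩
  have hQc : List.Chain' G.Adj (pre ++ [u]) := hPc.prefix hQpre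
  have hQn : (pre ++ [u]).Nodup := hQpre.sublist.nodup hPn
  have hpre_head : pre.head? = some v := by
    cases hpe : pre with
    | nil =>
      exfalso
      rw [← hPsplit, hpe, List.nil_append, hrest_cons] at hPhead
      simp only [List.head?_cons, Option.some.injEq] at hPhead
      exact hvY (hPhead ▸ huY)
    | cons a t =>
      rw [← hPsplit, hpe] at hPhead
      simpa using hPhead
  have hpre_notY : ∀ x ∈ pre, x ∉ Y := by
    intro x hx
    have := List.mem_takeWhile_imp hx
    simpa using this
  obtain ⟨Y₁, Y₂, hYsplit⟩ := List.append_of_mem huY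
  have hlen : Y₁.length + Y₂.length + 1 = l := by
    rw [hYsplit] at hYl; simp at hYl; omega
  rcases (by omega : (l+1)/2 ≤ Y₂.length + 1 ∨ (l+1)/2 ≤ Y₁.length + 1) with hcase | hcase
  · have hsubY : ∀ x ∈ u :: Y₂, x ∈ Y := fun x hx => by
      rw [hYsplit]; exact List.mem_append_right _ hx
    refine part1_finish pre Y₂ u hQc hQn hpre_head ?_ ?_
      (fun x hx hmem => hpre_notY x hx (hsubY _ hmem))
      (fun x hx => hYC x (hsubY x hx)) hcase
    · exact hYc.suffix ⟨Y₁, hYsplit.symm⟩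
    · have hsfx : (u :: Y₂) <:+ Y := ⟨Y₁, hYsplit.symm⟩
      exact hsfx.sublist.nodup hYn
  · have hrev : u :: Y₁.reverse = (Y₁ ++ [u]).reverse := by simp
    have hprefY : (Y₁ ++ [u]) <+: Y := ⟨Y₂, by rw [hYsplit]; simp⟩
    have hsubY : ∀ x ∈ u :: Y₁.reverse, x ∈ Y := fun x hx => by
      rw [hrev, List.mem_reverse] at hx
      exact hprefY.sublist.mem hx
    refine part1_finish pre Y₁.reverse u hQc hQn hpre_head ?_ ?_
      (fun x hx hmem => hpre_notY x hx (hsubY _ hmem))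
      (fun x hx => hYC x (hsubY x hx)) (by simpa using hcase)
    · rw [hrev]; exact chain'_adj_rev (hYc.prefix hprefY)
    · rw [hrev, List.nodup_reverse]
      exact hprefY.sublist.nodup hYn

theorem stmt_8 (G : SimpleGraph V) (l : ℕ) (v : V)
    (hl : 2 ≤ l) (hconn : G.Connected)
    (hG : ∃ L : List V, IsLPathL G l L) :
    (∀ w : V, w ≠ v →
      (∃ Y : List V, IsLPathL G l Y ∧ ∀ x ∈ Y, ReachAvoid G {v} w x) →
      ∃ M : List V, IsPathL G M ∧ M.head? = some v ∧ (l + 1) / 2 + 1 ≤ M.length ∧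
        ∀ x ∈ M.tail, ReachAvoid G {v} w x) ∧
    (∀ w w' : V, w ≠ v → w' ≠ v →
      (∃ Y : List V, IsLPathL G l Y ∧ ∀ x ∈ Y, ReachAvoid G {v} w x) →
      (∃ Y : List V, IsLPathL G l Y ∧ ∀ x ∈ Y, ReachAvoid G {v} w' x) →
      ¬ ReachAvoid G {v} w w' →
      ∃ M : List V, IsVPathL G l v M ∧
        ∀ x ∈ M, x ≠ v → (ReachAvoid G {v} w x ∨ ReachAvoid G {v} w' x)) := by
  have hpart1 : ∀ w : V,
      (∃ Y : List V, IsLPathL G l Y ∧ ∀ x ∈ Y, ReachAvoid G {v} w x) →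
      ∃ M : List V, IsPathL G M ∧ M.head? = some v ∧ (l + 1) / 2 + 1 ≤ M.length ∧
        ∀ x ∈ M.tail, ReachAvoid G {v} w x := by
    rintro w ⟨Y, hY, hYC⟩
    exact part1 hl hconn w Y hY hYC
  refine ⟨fun w _ h => hpart1 w h, ?_⟩
  intro w w' hw hw' hC hC' hsep
  obtain ⟨M, ⟨hMc, hMn⟩, hMh, hMl, hMr⟩ := hpart1 w hC
  obtain ⟨M', ⟨hM'c, hM'n⟩, hM'h, hM'l, hM'r⟩ := hpart1 w' hC'
  set k := (l + 1) / 2 with hkdef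
  obtain ⟨Mt, rfl⟩ : ∃ Mt, M = v :: Mt := by
    cases M with
    | nil => simp at hMh
    | cons a t =>
      simp only [List.head?_cons, Option.some.injEq] at hMh
      exact ⟨t, by rw [hMh]⟩
  obtain ⟨M't, rfl⟩ : ∃ M't, M' = v :: M't := by
    cases M' with
    | nil => simp at hM'h
    | cons a t =>
      simp only [List.head?_cons, Option.some.injEq] at hM'h
      exact ⟨t, by rw [hM'h]⟩
  simp only [List.length_cons] at hMl hM'l
  have hMtl : k ≤ Mt.length := by omega
  have hM'tl : k ≤ M't.length := by omega
  have hvMt : v ∉ Mt := (List.nodup_cons.mp hMn).1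
  have hvM't : v ∉ M't := (List.nodup_cons.mp hM'n).1
  have hMtr : ∀ x ∈ Mt, ReachAvoid G {v} w x := fun x hx => hMr x hx
  have hM'tr : ∀ x ∈ M't, ReachAvoid G {v} w' x := fun x hx => hM'r x hx
  have hdisj : ∀ x ∈ Mt, x ∉ M't := fun x hx hx' =>
    hsep (ra_trans_s8 (hMtr x hx) (ra_symm_s8 (hM'tr x hx')))
  set P := Mt.reverse ++ v :: M't with hPdef
  have hPc : List.Chain' G.Adj P := by
    rw [hPdef, List.Chain', List.isChain_append]
    refine ⟨chain'_adj_rev (List.isChain_cons.mp hMc).2, hM'c, ?_⟩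
    intro x hx y hy
    simp only [List.head?_cons, Option.mem_def, Option.some.injEq] at hy
    subst hy
    rw [List.getLast?_reverse] at hx
    exact ((List.isChain_cons.mp hMc).1 x hx).symm
  have hPn : P.Nodup := by
    rw [hPdef, List.nodup_append']
    refine ⟨List.nodup_reverse.mpr (List.nodup_cons.mp hMn).2, hM'n, ?_⟩
    intro x hx hx'
    rw [List.mem_reverse] at hx
    rcases List.mem_cons.mp hx' with rfl | hx''
    · exact hvMt hx
    · exact hdisj x hx hx''
  have hPlen : P.length = Mt.length + 1 + M't.length := by
    rw [hPdef]; simp; omega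
  have hPv : P[Mt.length]? = some v := by
    rw [hPdef, List.getElem?_append_right (by simp)]
    simp
  have hkl : k < l := by omega
  have h2k : l ≤ 2 * k := by omega
  set N := (P.drop (Mt.length - k)).take l with hNdef
  have hNl : N.length = l := by
    rw [hNdef, List.length_take, List.length_drop, hPlen]
    omega
  have hNc : List.Chain' G.Adj N :=
    (hPc.suffix (List.drop_suffix _ _)).prefix (List.take_prefix _ _)
  have hNsub : N.Sublist P := (List.take_sublist _ _).trans (List.drop_sublist _ _)
  have hNn : N.Nodup := hNsub.nodup hPn
  have hvN : v ∈ N := by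
    have hget : N[k]? = some v := by
      rw [hNdef, List.getElem?_take, if_pos hkl, List.getElem?_drop]
      rwa [(by omega : Mt.length - k + k = Mt.length)]
    exact List.mem_of_getElem? hget
  refine ⟨N, ⟨⟨⟨hNc, hNn⟩, hNl⟩, hvN⟩, ?_⟩
  intro x hxN hxv
  have hxP : x ∈ P := hNsub.subset hxN
  rw [hPdef, List.mem_append, List.mem_reverse, List.mem_cons] at hxP
  rcases hxP with hx | hx | hx
  · exact Or.inl (hMtr x hx)
  · exact absurd hx hxv
  · exact Or.inr (hM'tr x hx)
end

section
/- Let l = 7 and let G be a graph with no two intersecting v-paths, with canonical v-path P = x'_1,…,x'_p,v,x_1,…,x_{6−p}. Let C = {y} be a connected component of G_v − V(P) of size one adjacent to both x_1 and x_4 (an x_1/x_4-component). Then every 7-path in G containing y also contains x_4. -/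
variable {V : Type*} [Fintype V] [DecidableEq V]

lemma build {G : SimpleGraph V} {v y u : V} {N P : List V}
    (hno : ∀ L L' : List V, IsVPathL G 7 v L → IsVPathL G 7 v L' → ¬ IntersectingVP v L L')
    (hN : IsVPathL G 7 v N) (hP : IsVPathL G 7 v P)
    (hyN : y ∈ N) (hyP : y ∉ P) (huv : u ≠ v) (huN : u ∈ N) (huP : u ∈ P) : False :=
  hno N P hN hP ⟨fun h => hyP (List.mem_toFinset.mp (h ▸ List.mem_toFinset.mpr hyN)),
    u, huv, huN, huP⟩

lemma nbr_exists (G : SimpleGraph V) {y : V} {L : List V} (hc : L.Chain' G.Adj)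
    (hlen : 2 ≤ L.length) (hy : y ∈ L) : ∃ z ∈ L, G.Adj y z := by
  obtain ⟨S, T, rfl⟩ := List.append_of_mem hy
  cases T with
  | cons t T' =>
    exact ⟨t, by simp, (List.isChain_cons_cons.mp (List.isChain_append.mp hc).2.1).1⟩
  | nil =>
    obtain rfl | ⟨S', s, rfl⟩ := S.eq_nil_or_concat
    · simp at hlen
    · rw [List.concat_eq_append] at hc
      have h := (List.isChain_append.mp hc).2.2
      exact ⟨s, by simp, (h s (by simp [List.getLast?_concat]) y (by simp)).symm⟩

lemma len4 {α} (L : List α) (h : L.length = 4) : ∃ a b c d, L = [a,b,c,d] := by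
  rcases L with _|⟨a,_|⟨b,_|⟨c,_|⟨d,_|⟨e,L⟩⟩⟩⟩⟩ <;> first
    | exact ⟨_,_,_,_,rfl⟩ | (simp at h) | (simp at h; omega)

lemma len5 {α} (L : List α) (h : L.length = 5) : ∃ a b c d e, L = [a,b,c,d,e] := by
  rcases L with _|⟨a,_|⟨b,_|⟨c,_|⟨d,_|⟨e,_|⟨f,L⟩⟩⟩⟩⟩⟩ <;> first
    | exact ⟨_,_,_,_,_,rfl⟩ | (simp at h) | (simp at h; omega)

lemma len6 {α} (L : List α) (h : L.length = 6) : ∃ a b c d e f, L = [a,b,c,d,e,f] := by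
  rcases L with _|⟨a,_|⟨b,_|⟨c,_|⟨d,_|⟨e,_|⟨f,_|⟨g,L⟩⟩⟩⟩⟩⟩⟩ <;> first
    | exact ⟨_,_,_,_,_,_,rfl⟩ | (simp at h) | (simp at h; omega)

lemma head_case {G : SimpleGraph V} {v x₁ x₄ y : V} {T₀ P : List V}
    (hno : ∀ L L' : List V, IsVPathL G 7 v L → IsVPathL G 7 v L' → ¬ IntersectingVP v L L')
    (hPvp : IsVPathL G 7 v P)
    (hM : IsLPathL G 7 (y :: T₀))
    (hcb : ∀ z, G.Adj y z → z = x₁ ∨ z = x₄)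
    (hvx1 : G.Adj v x₁)
    (hvM : v ∉ y :: T₀) (hx4M : x₄ ∉ y :: T₀)
    (hx4v : x₄ ≠ v) (hx4P : x₄ ∈ P) (hx1v : x₁ ≠ v) (hx1P : x₁ ∈ P) : False := by
  cases T₀ with
  | nil => exact absurd hM.2 (by simp)
  | cons t T' =>
    have hyt : G.Adj y t := (List.isChain_cons_cons.mp hM.1.1).1
    have ht : t = x₁ := by
      rcases hcb t hyt with ht | ht
      · exact ht
      · exact absurd (by rw [ht]; simp : x₄ ∈ y :: t :: T') (ht ▸ hx4M)
    rw [ht] at hM hvM hx4M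
    have hN : IsVPathL G 7 v (v :: x₁ :: T') := by
      refine ⟨⟨⟨List.isChain_cons_cons.mpr ⟨hvx1, (List.isChain_cons_cons.mp hM.1.1).2⟩, ?_⟩, ?_⟩, by simp⟩
      · refine List.nodup_cons.mpr ⟨fun hv' => hvM (List.mem_cons_of_mem _ hv'), ?_⟩
        exact (List.nodup_cons.mp hM.1.2).2
      · simpa using hM.2
    refine hno P (v :: x₁ :: T') hPvp hN ⟨?_, x₁, hx1v, hx1P, by simp⟩
    intro h
    have h4 := List.mem_toFinset.mp (h ▸ List.mem_toFinset.mpr hx4P)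
    simp only [List.mem_cons] at h4 hx4M
    tauto

lemma mainfin {G : SimpleGraph V} {v x₁ x₄ y : V} {M P : List V}
    (hno : ∀ L L' : List V, IsVPathL G 7 v L → IsVPathL G 7 v L' → ¬ IntersectingVP v L L')
    (hPvp : IsVPathL G 7 v P)
    (hcb : ∀ z, G.Adj y z → z = x₁ ∨ z = x₄)
    (hvx1 : G.Adj v x₁) (hyP : y ∉ P)
    (hx1v : x₁ ≠ v) (hx1P : x₁ ∈ P) (hx4v : x₄ ≠ v) (hx4P : x₄ ∈ P)
    (hM : IsLPathL G 7 M) (hyM : y ∈ M) (hx4M : x₄ ∉ M) : False := by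
  have claimA : ∀ N, IsVPathL G 7 v N → y ∉ N := by
    intro N hN hyN
    obtain ⟨z, hzN, hz⟩ := nbr_exists G hN.1.1.1 (by rw [hN.1.2]; omega) hyN
    rcases hcb z hz with h | h
    · exact build hno hN hPvp hyN hyP hx1v (h ▸ hzN) hx1P
    · exact build hno hN hPvp hyN hyP hx4v (h ▸ hzN) hx4P
  have hvM : v ∉ M := fun hv => claimA M ⟨hM, hv⟩ hyM
  obtain ⟨S, T, rfl⟩ := List.append_of_mem hyM
  obtain rfl | ⟨S', s, rfl⟩ := S.eq_nil_or_concat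
  · exact head_case hno hPvp (by simpa using hM) hcb hvx1 (by simpa using hvM)
      (by simpa using hx4M) hx4v hx4P hx1v hx1P
  · cases T with
    | nil =>
      have he : (S'.concat s ++ [y]).reverse = y :: s :: S'.reverse := by simp
      have hc : List.Chain' G.Adj (y :: s :: S'.reverse) := by
        rw [← he]
        exact List.isChain_reverse.mpr ((hM.1.1).imp fun _ _ h => h.symm)
      have hnd : (y :: s :: S'.reverse).Nodup := by
        rw [← he]; exact List.nodup_reverse.mpr hM.1.2
      have hlen : (y :: s :: S'.reverse).length = 7 := by
        have := hM.2; simp at this ⊢; omega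
      refine head_case hno hPvp ⟨⟨hc, hnd⟩, hlen⟩ hcb hvx1 ?_ ?_ hx4v hx4P hx1v hx1P
      · simp only [List.mem_cons, List.mem_reverse] at hvM ⊢
        simp at hvM; tauto
      · simp only [List.mem_cons, List.mem_reverse] at hx4M ⊢
        simp at hx4M; tauto
    | cons t T' =>
      have hc := hM.1.1
      rw [List.concat_eq_append, List.append_assoc] at hc
      have h1 := (List.isChain_append.mp hc).2.1
      have hsy : G.Adj s y := (List.isChain_cons_cons.mp h1).1
      have hyt : G.Adj y t := (List.isChain_cons_cons.mp (List.isChain_cons_cons.mp h1).2).1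
      have hs : s = x₁ := by
        rcases hcb s hsy.symm with h | h
        · exact h
        · exact absurd (by rw [← h]; simp : x₄ ∈ S'.concat s ++ y :: t :: T') hx4M
      have ht : t = x₁ := by
        rcases hcb t hyt with h | h
        · exact h
        · exact absurd (by rw [← h]; simp : x₄ ∈ S'.concat s ++ y :: t :: T') hx4M
      have hd := List.disjoint_of_nodup_append hM.1.2
      exact hd (a := x₁) (by rw [← hs]; simp) (by rw [← ht]; simp)

theorem stmt_9 (G : SimpleGraph V) (v : V) (A B : List V) (x₁ x₄ y : V)
    (hno : ∀ L L' : List V, IsVPathL G 7 v L → IsVPathL G 7 v L' →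
      ¬ IntersectingVP v L L')
    (hP : IsLPathL G 7 (A ++ v :: B))
    (hpre : A.length ≤ 3)
    (hmin : ∀ A' B' : List V, IsLPathL G 7 (A' ++ v :: B') →
      (A' ++ v :: B').toFinset = (A ++ v :: B).toFinset → A.length ≤ A'.length)
    (hx1 : B[0]? = some x₁) (hx4 : B[3]? = some x₄)
    (hy : y ∉ A ++ v :: B) (hyv : G.Reachable v y)
    (hadj1 : G.Adj x₁ y) (hadj4 : G.Adj x₄ y)
    (hsingle : ∀ z : V, G.Adj y z → z ∈ A ++ v :: B) :
    ∀ M : List V, IsLPathL G 7 M → y ∈ M → x₄ ∈ M := by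
  intro M hM hyM
  by_contra hx4M
  have hPvp : IsVPathL G 7 v (A ++ v :: B) := ⟨hP, by simp⟩
  have hx1B : x₁ ∈ B := List.mem_of_getElem? hx1
  have hx4B : x₄ ∈ B := List.mem_of_getElem? hx4
  have hx1P : x₁ ∈ A ++ v :: B := by simp [hx1B]
  have hx4P : x₄ ∈ A ++ v :: B := by simp [hx4B]
  have hvB : v ∉ B := by
    have h2 : (v :: B).Nodup := hP.1.2.of_append_right
    exact (List.nodup_cons.mp h2).1
  have hx1v : x₁ ≠ v := fun h => hvB (h ▸ hx1B)
  have hx4v : x₄ ≠ v := fun h => hvB (h ▸ hx4B)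
  have hBlen : 3 < B.length := (List.getElem?_eq_some_iff.mp hx4).1
  have hAlen : A.length ≤ 2 := by have h7 := hP.2; simp at h7; omega
  rcases A with _ | ⟨a₁, _ | ⟨a₂, _ | ⟨a₃, A⟩⟩⟩
  -- p = 0
  · have hB6 : B.length = 6 := by have h7 := hP.2; simp at h7; omega
    obtain ⟨b1, b2, b3, b4, b5, b6, rfl⟩ := len6 B hB6
    simp at hx1 hx4
    subst b1; subst b4
    have hvx1 : G.Adj v x₁ := by
      have hc := hP.1.1; simp [List.Chain', List.isChain_cons_cons] at hc; tauto
    refine mainfin hno hPvp ?_ hvx1 hy hx1v hx1P hx4v hx4P hM hyM hx4M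
    intro z hz
    have hm := hsingle z hz
    simp at hm
    rcases hm with h | h | h | h | h | h | h <;> subst z
    · exact (build hno (N := [y, v, x₁, b2, b3, x₄, b5])
        (by clear hmin hsingle hPvp hM hyM hyv hno hBlen hpre hAlen; refine ⟨⟨⟨?_, ?_⟩, rfl⟩, by simp⟩ <;>
          simp_all [IsLPathL, IsPathL, List.Chain', List.isChain_cons_cons, SimpleGraph.adj_comm, eq_comm])
        hPvp (by simp) hy hx1v (by simp) hx1P).elim
    · exact Or.inl rfl
    · exact (build hno (N := [v, x₁, y, b2, b3, x₄, b5])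
        (by clear hmin hsingle hPvp hM hyM hyv hno hBlen hpre hAlen; refine ⟨⟨⟨?_, ?_⟩, rfl⟩, by simp⟩ <;>
          simp_all [IsLPathL, IsPathL, List.Chain', List.isChain_cons_cons, SimpleGraph.adj_comm, eq_comm])
        hPvp (by simp) hy hx1v (by simp) hx1P).elim
    · exact (build hno (N := [v, x₁, y, b3, x₄, b5, b6])
        (by clear hmin hsingle hPvp hM hyM hyv hno hBlen hpre hAlen; refine ⟨⟨⟨?_, ?_⟩, rfl⟩, by simp⟩ <;>
          simp_all [IsLPathL, IsPathL, List.Chain', List.isChain_cons_cons, SimpleGraph.adj_comm, eq_comm])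
        hPvp (by simp) hy hx1v (by simp) hx1P).elim
    · exact Or.inr rfl
    · exact (build hno (N := [v, x₁, y, b5, x₄, b3, b2])
        (by clear hmin hsingle hPvp hM hyM hyv hno hBlen hpre hAlen; refine ⟨⟨⟨?_, ?_⟩, rfl⟩, by simp⟩ <;>
          simp_all [IsLPathL, IsPathL, List.Chain', List.isChain_cons_cons, SimpleGraph.adj_comm, eq_comm])
        hPvp (by simp) hy hx1v (by simp) hx1P).elim
    · exact (build hno (N := [v, x₁, y, b6, b5, x₄, b3])
        (by clear hmin hsingle hPvp hM hyM hyv hno hBlen hpre hAlen; refine ⟨⟨⟨?_, ?_⟩, rfl⟩, by simp⟩ <;>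
          simp_all [IsLPathL, IsPathL, List.Chain', List.isChain_cons_cons, SimpleGraph.adj_comm, eq_comm])
        hPvp (by simp) hy hx1v (by simp) hx1P).elim
  -- p = 1
  · have hB5 : B.length = 5 := by have h7 := hP.2; simp at h7; omega
    obtain ⟨b1, b2, b3, b4, b5, rfl⟩ := len5 B hB5
    simp at hx1 hx4
    subst b1; subst b4
    have hvx1 : G.Adj v x₁ := by
      have hc := hP.1.1; simp [List.Chain', List.isChain_cons_cons] at hc; tauto
    refine mainfin hno hPvp ?_ hvx1 hy hx1v hx1P hx4v hx4P hM hyM hx4M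
    intro z hz
    have hm := hsingle z hz
    simp at hm
    rcases hm with h | h | h | h | h | h | h <;> subst z
    · exact (build hno (N := [y, a₁, v, x₁, b2, b3, x₄])
        (by clear hmin hsingle hPvp hM hyM hyv hno hBlen hpre hAlen; refine ⟨⟨⟨?_, ?_⟩, rfl⟩, by simp⟩ <;>
          simp_all [IsLPathL, IsPathL, List.Chain', List.isChain_cons_cons, SimpleGraph.adj_comm, eq_comm])
        hPvp (by simp) hy hx1v (by simp) hx1P).elim
    · exact (build hno (N := [y, v, x₁, b2, b3, x₄, b5])
        (by clear hmin hsingle hPvp hM hyM hyv hno hBlen hpre hAlen; refine ⟨⟨⟨?_, ?_⟩, rfl⟩, by simp⟩ <;>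
          simp_all [IsLPathL, IsPathL, List.Chain', List.isChain_cons_cons, SimpleGraph.adj_comm, eq_comm])
        hPvp (by simp) hy hx1v (by simp) hx1P).elim
    · exact Or.inl rfl
    · exact (build hno (N := [a₁, v, x₁, y, b2, b3, x₄])
        (by clear hmin hsingle hPvp hM hyM hyv hno hBlen hpre hAlen; refine ⟨⟨⟨?_, ?_⟩, rfl⟩, by simp⟩ <;>
          simp_all [IsLPathL, IsPathL, List.Chain', List.isChain_cons_cons, SimpleGraph.adj_comm, eq_comm])
        hPvp (by simp) hy hx1v (by simp) hx1P).elim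
    · exact (build hno (N := [a₁, v, x₁, y, b3, x₄, b5])
        (by clear hmin hsingle hPvp hM hyM hyv hno hBlen hpre hAlen; refine ⟨⟨⟨?_, ?_⟩, rfl⟩, by simp⟩ <;>
          simp_all [IsLPathL, IsPathL, List.Chain', List.isChain_cons_cons, SimpleGraph.adj_comm, eq_comm])
        hPvp (by simp) hy hx1v (by simp) hx1P).elim
    · exact Or.inr rfl
    · exact (build hno (N := [a₁, v, x₁, y, b5, x₄, b3])
        (by clear hmin hsingle hPvp hM hyM hyv hno hBlen hpre hAlen; refine ⟨⟨⟨?_, ?_⟩, rfl⟩, by simp⟩ <;>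
          simp_all [IsLPathL, IsPathL, List.Chain', List.isChain_cons_cons, SimpleGraph.adj_comm, eq_comm])
        hPvp (by simp) hy hx1v (by simp) hx1P).elim
  -- p = 2
  · have hB4 : B.length = 4 := by have h7 := hP.2; simp at h7; omega
    obtain ⟨b1, b2, b3, b4, rfl⟩ := len4 B hB4
    simp at hx1 hx4
    subst b1; subst b4
    have hvx1 : G.Adj v x₁ := by
      have hc := hP.1.1; simp [List.Chain', List.isChain_cons_cons] at hc; tauto
    refine mainfin hno hPvp ?_ hvx1 hy hx1v hx1P hx4v hx4P hM hyM hx4M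
    intro z hz
    have hm := hsingle z hz
    simp at hm
    rcases hm with h | h | h | h | h | h | h <;> subst z
    · exact (build hno (N := [y, a₁, a₂, v, x₁, b2, b3])
        (by clear hmin hsingle hPvp hM hyM hyv hno hBlen hpre hAlen; refine ⟨⟨⟨?_, ?_⟩, rfl⟩, by simp⟩ <;>
          simp_all [IsLPathL, IsPathL, List.Chain', List.isChain_cons_cons, SimpleGraph.adj_comm, eq_comm])
        hPvp (by simp) hy hx1v (by simp) hx1P).elim
    · exact (build hno (N := [y, a₂, v, x₁, b2, b3, x₄])
        (by clear hmin hsingle hPvp hM hyM hyv hno hBlen hpre hAlen; refine ⟨⟨⟨?_, ?_⟩, rfl⟩, by simp⟩ <;>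
          simp_all [IsLPathL, IsPathL, List.Chain', List.isChain_cons_cons, SimpleGraph.adj_comm, eq_comm])
        hPvp (by simp) hy hx1v (by simp) hx1P).elim
    · exact (build hno (N := [a₁, a₂, v, y, x₁, b2, b3])
        (by clear hmin hsingle hPvp hM hyM hyv hno hBlen hpre hAlen; refine ⟨⟨⟨?_, ?_⟩, rfl⟩, by simp⟩ <;>
          simp_all [IsLPathL, IsPathL, List.Chain', List.isChain_cons_cons, SimpleGraph.adj_comm, eq_comm])
        hPvp (by simp) hy hx1v (by simp) hx1P).elim
    · exact Or.inl rfl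
    · exact (build hno (N := [a₁, a₂, v, x₁, y, b2, b3])
        (by clear hmin hsingle hPvp hM hyM hyv hno hBlen hpre hAlen; refine ⟨⟨⟨?_, ?_⟩, rfl⟩, by simp⟩ <;>
          simp_all [IsLPathL, IsPathL, List.Chain', List.isChain_cons_cons, SimpleGraph.adj_comm, eq_comm])
        hPvp (by simp) hy hx1v (by simp) hx1P).elim
    · exact (build hno (N := [a₁, a₂, v, x₁, y, b3, b2])
        (by clear hmin hsingle hPvp hM hyM hyv hno hBlen hpre hAlen; refine ⟨⟨⟨?_, ?_⟩, rfl⟩, by simp⟩ <;>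
          simp_all [IsLPathL, IsPathL, List.Chain', List.isChain_cons_cons, SimpleGraph.adj_comm, eq_comm])
        hPvp (by simp) hy hx1v (by simp) hx1P).elim
    · exact Or.inr rfl
  -- p ≥ 3: impossible
  · simp at hAlen
end

section
/- Among the branching vectors V_s = (1,…,1, 2,…,2), where the value 1 appears s times and the value 2 appears (l−1−s)^2 times, for 1 ≤ s ≤ l−2 and fixed l ≥ 3, the vector V_1 has the largest branching number. -/
/-- Among the branching vectors `V_s` (with `s` entries equal to 1 and `(l-1-s)^2`
entries equal to 2), for `1 ≤ s ≤ l - 2` and fixed `l ≥ 3`, the vector `V_1` has the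
largest branching number: if `x > 1` is the root for `V_s` and `y > 1` is the root for
`V_1`, then `x ≤ y`. -/
theorem stmt_11 (l s : ℕ) (hl : 3 ≤ l) (hs1 : 1 ≤ s) (hs2 : s ≤ l - 2)
    (x y : ℝ) (hx : 1 < x) (hy : 1 < y)
    (hrx : 1 = (s : ℝ) / x + (((l - 1 - s) ^ 2 : ℕ) : ℝ) / x ^ 2)
    (hry : 1 = 1 / y + (((l - 2) ^ 2 : ℕ) : ℝ) / y ^ 2) :
    x ≤ y := by
  have hx0 : (0:ℝ) < x := by linarith
  have hy0 : (0:ℝ) < y := by linarith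
  have hnat : (l - 1 - s) + s = (l - 2) + 1 := by omega
  set S : ℝ := (s : ℝ) with hS
  set K : ℝ := ((l - 2 : ℕ) : ℝ) with hK
  set A : ℝ := ((l - 1 - s : ℕ) : ℝ) with hA
  have hAeq : A + S = K + 1 := by
    rw [hA, hS, hK]; exact_mod_cast congrArg (Nat.cast : ℕ → ℝ) hnat
  clear_value S K A
  have hS1 : (1:ℝ) ≤ S := by rw [hS]; exact_mod_cast hs1
  have hSK : S ≤ K := by rw [hS, hK]; exact_mod_cast hs2
  have hx2 : x ^ 2 = S * x + A ^ 2 := by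
    have h := hrx
    push_cast at h
    field_simp at h
    rw [← hA] at h
    have h2 : x * x ^ 2 = x * (S * x + A ^ 2) := by linear_combination x * h
    exact mul_left_cancel₀ hx0.ne' h2
  have hy2 : y ^ 2 = y + K ^ 2 := by
    have h := hry
    push_cast at h
    field_simp at h
    rw [← hK] at h
    have h2 : y * y ^ 2 = y * (y + K ^ 2) := by linear_combination y * h
    exact mul_left_cancel₀ hy0.ne' h2
  have hx2' : x ^ 2 = S * x + (K + 1 - S) ^ 2 := by
    have : A = K + 1 - S := by linarith
    rw [this] at hx2; exact hx2
  have hF : (0:ℝ) ≤ (K - S) * (3 * K + 1 - S) := by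
    apply mul_nonneg <;> linarith
  have hxb : x ≤ 2 * K + 1 - S := by
    by_contra hcon
    push_neg at hcon
    have h1 : (0:ℝ) < x - (2 * K + 1 - S) := by linarith
    have h2 : (0:ℝ) < x + (2 * K + 1 - S) - S := by linarith
    have hp := mul_pos h1 h2
    have hid : (x - (2 * K + 1 - S)) * (x + (2 * K + 1 - S) - S)
        = -((K - S) * (3 * K + 1 - S) + K) := by linear_combination hx2'
    linarith
  have hm : (0:ℝ) ≤ (S - 1) * (2 * K + 1 - S - x) := by
    apply mul_nonneg <;> linarith
  have hkey : x ^ 2 - x ≤ K ^ 2 := by nlinarith [hm, hx2']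
  by_contra hcon
  push_neg at hcon
  have hp := mul_pos (by linarith : (0:ℝ) < x - y) (by linarith : (0:ℝ) < x + y - 1)
  nlinarith [hp, hkey, hy2]
end

section
/- The branching vector (1, 3, 4, 4, 4, 4, 3, 3, 3, 3, 3, 4, 4, 4, 4, 3, 4, 4, 4, 4, 3, 4, 4, 4, 4, 3, 4, 4, 4, 4) has branching number less than 2.897; i.e., the unique real root x > 1 of 1 = x^{−1} + 7·x^{−3} + 21·x^{−4} is less than 2.897. -/
private noncomputable def f12 : ℝ → ℝ := fun x => 1 / x + 7 / x ^ 3 + 21 / x ^ 4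

private lemma f12_anti : StrictAntiOn f12 (Set.Ioi (0 : ℝ)) := by
  intro a ha b hb hab
  simp only [Set.mem_Ioi] at ha hb
  unfold f12
  have h1 : 1 / b < 1 / a := one_div_lt_one_div_of_lt ha hab
  have h3 : (7 : ℝ) / b ^ 3 < 7 / a ^ 3 := by
    apply div_lt_div_of_pos_left (by norm_num) (by positivity)
    exact pow_lt_pow_left₀ hab ha.le (by norm_num)
  have h4 : (21 : ℝ) / b ^ 4 < 21 / a ^ 4 := by
    apply div_lt_div_of_pos_left (by norm_num) (by positivity)
    exact pow_lt_pow_left₀ hab ha.le (by norm_num)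
  linarith

private lemma f12_cont : ContinuousOn f12 (Set.Icc (1 : ℝ) 2.897) := by
  have hne : ∀ x ∈ Set.Icc (1 : ℝ) 2.897, x ≠ 0 := by
    intro x hx; have := hx.1; intro h; rw [h] at this; norm_num at this
  unfold f12
  apply ContinuousOn.add
  apply ContinuousOn.add
  · exact continuousOn_const.div continuousOn_id hne
  · exact continuousOn_const.div (continuousOn_id.pow 3) fun x hx => pow_ne_zero _ (hne x hx)
  · exact continuousOn_const.div (continuousOn_id.pow 4) fun x hx => pow_ne_zero _ (hne x hx)

/-- The branching vector with one entry 1, seven entries 3 and twenty-one entries 4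
has branching number less than `2.897`: the unique real root greater than 1 of
`1 = x⁻¹ + 7·x⁻³ + 21·x⁻⁴` is less than `2.897`. -/
theorem stmt_12 :
    ∃ x : ℝ, 1 < x ∧ 1 = 1 / x + 7 / x ^ 3 + 21 / x ^ 4 ∧ x < 2.897 ∧
      ∀ y : ℝ, 1 < y → 1 = 1 / y + 7 / y ^ 3 + 21 / y ^ 4 → y = x := by
  have hf1 : f12 1 = 29 := by unfold f12; norm_num
  have hfb : f12 2.897 < 1 := by unfold f12; norm_num
  have hmem : (1 : ℝ) ∈ Set.Icc (f12 2.897) (f12 1) := ⟨hfb.le, by rw [hf1]; norm_num⟩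
  obtain ⟨x, hx, hfx⟩ := intermediate_value_Icc' (by norm_num : (1:ℝ) ≤ 2.897) f12_cont hmem
  have hx1 : 1 < x := by
    rcases lt_or_eq_of_le hx.1 with h | h
    · exact h
    · exfalso; rw [← h, hf1] at hfx; norm_num at hfx
  have hx2 : x < 2.897 := by
    rcases lt_or_eq_of_le hx.2 with h | h
    · exact h
    · exfalso; rw [h] at hfx; linarith
  refine ⟨x, hx1, show (1:ℝ) = f12 x from hfx.symm, hx2, ?_⟩
  intro y hy hfy
  have : f12 y = f12 x := by unfold f12 at hfx ⊢; rw [hfx]; exact hfy.symm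
  exact f12_anti.injOn (Set.mem_Ioi.2 (by linarith)) (Set.mem_Ioi.2 (by linarith)) this
end

section
/- Let G be a graph, v a vertex, l ≥ 2, and let S be an l-path vertex cover of G with v ∈ S. Let X be any v-hitting set. Then S' = (S \ {v}) ∪ X is also an l-path vertex cover of G. -/
variable {V : Type*} [Fintype V] [DecidableEq V]

theorem stmt_15 (G : SimpleGraph V) (l : ℕ) (v : V) (S X : Finset V)
    (hl : 2 ≤ l) (hS : IsLPVC G l S) (hv : v ∈ S) (hX : IsVHit G l v X) :
    IsLPVC G l (S.erase v ∪ X) := by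
  rintro ⟨L, hL, havoid⟩
  have hvL : v ∈ L := by
    by_contra hvL
    exact hS ⟨L, hL, fun x hx hxS => havoid x hx (Finset.mem_union_left _
      (Finset.mem_erase.mpr ⟨fun h => hvL (h ▸ hx), hxS⟩))⟩
  obtain ⟨x, hxX, hxL⟩ := hX.2.2 L ⟨hL, hvL⟩
  exact havoid x hxL (Finset.mem_union_right _ hxX)
end

section
/- Let G be a graph and v a vertex such that G_v − v contains no l-path (where G_v is the component of v). Then (G, k) has an l-path vertex cover of size at most k if and only if (G − C_v, k − 1) has an l-path vertex cover of size at most k − 1, provided G_v contains at least one l-path. -/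
variable {V : Type*} [Fintype V] [DecidableEq V]

/-- `S` is an `l`-path vertex cover of the subgraph of `G` induced by the vertex set
`A`: there is no `l`-path of `G` whose vertices all lie in `A` and avoid `S`. -/
def IsLPVCOn (G : SimpleGraph V) (l : ℕ) (A : Set V) (S : Finset V) : Prop :=
  ¬ ∃ L, IsLPathL G l L ∧ ∀ x ∈ L, x ∈ A ∧ x ∉ S

theorem stmt_17 (G : SimpleGraph V) (l k : ℕ) (v : V)
    (hl : 2 ≤ l) (hk : 1 ≤ k)
    (hGv : ∃ L : List V, IsLPathL G l L ∧ ∀ x ∈ L, G.Reachable v x)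
    (hGvv : ¬ ∃ L : List V, IsLPathL G l L ∧ ∀ x ∈ L, G.Reachable v x ∧ x ≠ v) :
    (∃ S : Finset V, IsLPVC G l S ∧ S.card ≤ k) ↔
      (∃ S : Finset V, IsLPVCOn G l {x | ¬ G.Reachable v x} S ∧ S.card ≤ k - 1) := by
  classical
  have chain_reach : ∀ (a : V) (t : List V), List.Chain' G.Adj (a :: t) →
      ∀ x ∈ a :: t, G.Reachable a x := by
    intro a t
    induction t generalizing a with
    | nil => intro _ x hx; simp at hx; subst hx; rfl
    | cons b t ih =>
      intro h x hx
      simp only [List.Chain', List.isChain_cons_cons] at h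
      rcases List.mem_cons.mp hx with rfl | hx'
      · rfl
      · exact (h.1.reachable).trans (ih b h.2 x hx')
  have path_reach : ∀ L : List V, List.Chain' G.Adj L →
      ∀ x ∈ L, ∀ y ∈ L, G.Reachable x y := by
    intro L hL x hx y hy
    cases L with
    | nil => simp at hx
    | cons a t =>
      exact (chain_reach a t hL x hx).symm.trans (chain_reach a t hL y hy)
  constructor
  · rintro ⟨S, hS, hcard⟩
    obtain ⟨L, hL, hLr⟩ := hGv
    have : ∃ x ∈ L, x ∈ S := by
      by_contra hno
      push_neg at hno
      exact hS ⟨L, hL, hno⟩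
    obtain ⟨w, hwL, hwS⟩ := this
    refine ⟨S.filter (fun x => ¬ G.Reachable v x), ?_, ?_⟩
    · rintro ⟨L', hL', hL'av⟩
      refine hS ⟨L', hL', fun x hx hxS => ?_⟩
      exact (hL'av x hx).2 (Finset.mem_filter.mpr ⟨hxS, (hL'av x hx).1⟩)
    · have hsub : S.filter (fun x => ¬ G.Reachable v x) ⊆ S.erase w := by
        intro x hx
        rw [Finset.mem_filter] at hx
        refine Finset.mem_erase.mpr ⟨?_, hx.1⟩
        rintro rfl
        exact hx.2 (hLr _ hwL)
      calc (S.filter (fun x => ¬ G.Reachable v x)).card ≤ (S.erase w).card :=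
            Finset.card_le_card hsub
        _ = S.card - 1 := Finset.card_erase_of_mem hwS
        _ ≤ k - 1 := Nat.sub_le_sub_right hcard 1
  · rintro ⟨S, hS, hcard⟩
    refine ⟨insert v S, ?_, ?_⟩
    · rintro ⟨L, hL, hLav⟩
      by_cases hr : ∃ x ∈ L, G.Reachable v x
      · obtain ⟨x0, hx0L, hx0r⟩ := hr
        refine hGvv ⟨L, hL, fun x hx => ⟨hx0r.trans (path_reach L hL.1.1 x0 hx0L x hx), ?_⟩⟩
        rintro rfl
        exact hLav x hx (Finset.mem_insert_self _ S)
      · push_neg at hr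
        exact hS ⟨L, hL, fun x hx => ⟨hr x hx, fun hxS =>
          hLav x hx (Finset.mem_insert_of_mem hxS)⟩⟩
    · calc (insert v S).card ≤ S.card + 1 := Finset.card_insert_le v S
        _ ≤ (k - 1) + 1 := by omega
        _ = k := by omega
end
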